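/- arXiv:1909.10999 — 5 statements merged into one kernel-verified Lean document; each statement's English description precedes it below -/
import Mathlib

section
/- The disturbance-feedback cost J̃ is strictly convex. Precisely: under the stated positive-(semi)definiteness assumptions on M, Σw, R, Σv, the function J̃ : ℝ^{mN×pN} → ℝ is a quadratic function of Q that is strictly convex on ℝ^{mN×pN}. -/
open Matrix

noncomputable section

/-- The positive semidefinite square root of a positive semidefinite matrix, as defined in
the older Mathlib (`Matrix.PosSemidef.sqrt`, since removed). -/
def Matrix.PosSemidef.sqrt {n : Type*} [Fintype n] [DecidableEq n]
    {A : Matrix n n ℝ} (hA : A.PosSemidef) : Matrix n n ℝ :=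
  hA.1.eigenvectorUnitary.1 * diagonal ((↑) ∘ (√·) ∘ hA.1.eigenvalues) *
    (star hA.1.eigenvectorUnitary : Matrix n n ℝ)

/-- Squared Frobenius norm of a real matrix. -/
def frobSq {a b : Type*} [Fintype a] [Fintype b] (A : Matrix a b ℝ) : ℝ :=
  ∑ i, ∑ j, (A i j) ^ 2

/-- Squared Euclidean norm of a real vector. -/
def vecSq {a : Type*} [Fintype a] (v : a → ℝ) : ℝ :=
  ∑ i, (v i) ^ 2

/-- The finite-horizon LQG cost `J(K)` of the paper, written in terms of the
square roots `Msq = M^{1/2}`, `Swsq = Σw^{1/2}`, `Rsq = R^{1/2}`, `Svsq = Σv^{1/2}`. -/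
def Jcost {nn mm pp : ℕ}
    (P11 : Matrix (Fin nn) (Fin nn) ℝ) (P12 : Matrix (Fin nn) (Fin mm) ℝ)
    (C : Matrix (Fin pp) (Fin nn) ℝ)
    (Msq Swsq : Matrix (Fin nn) (Fin nn) ℝ)
    (Rsq : Matrix (Fin mm) (Fin mm) ℝ) (Svsq : Matrix (Fin pp) (Fin pp) ℝ)
    (μ : Fin nn → ℝ) (K : Matrix (Fin mm) (Fin pp) ℝ) : ℝ :=
  frobSq (Msq * (1 - P12 * K * C)⁻¹ * P11 * Swsq)
  + frobSq (Msq * P12 * K * (1 - C * P12 * K)⁻¹ * Svsq)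
  + frobSq (Rsq * K * (1 - C * P12 * K)⁻¹ * C * P11 * Swsq)
  + frobSq (Rsq * K * (1 - C * P12 * K)⁻¹ * Svsq)
  + vecSq ((Msq * (1 - P12 * K * C)⁻¹ * P11).mulVec μ)
  + vecSq ((Rsq * K * (1 - C * P12 * K)⁻¹ * C * P11).mulVec μ)

/-- The disturbance-feedback cost `J̃(Q)` of the paper, written in terms of the
square roots `Msq = M^{1/2}`, `Swsq = Σw^{1/2}`, `Rsq = R^{1/2}`, `Svsq = Σv^{1/2}`. -/
def Jtilde {nn mm pp : ℕ}
    (P11 : Matrix (Fin nn) (Fin nn) ℝ) (P12 : Matrix (Fin nn) (Fin mm) ℝ)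
    (C : Matrix (Fin pp) (Fin nn) ℝ)
    (Msq Swsq : Matrix (Fin nn) (Fin nn) ℝ)
    (Rsq : Matrix (Fin mm) (Fin mm) ℝ) (Svsq : Matrix (Fin pp) (Fin pp) ℝ)
    (μ : Fin nn → ℝ) (Q : Matrix (Fin mm) (Fin pp) ℝ) : ℝ :=
  frobSq (Msq * (1 + P12 * Q * C) * P11 * Swsq)
  + frobSq (Msq * P12 * Q * Svsq)
  + frobSq (Rsq * Q * C * P11 * Swsq)
  + frobSq (Rsq * Q * Svsq)
  + vecSq ((Rsq * Q * C * P11).mulVec μ)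
  + vecSq ((Msq * (1 + P12 * Q * C) * P11).mulVec μ)

end

noncomputable section Aux

lemma Matrix.PosSemidef.sqrt_mul_self {n : Type*} [Fintype n] [DecidableEq n]
    {A : Matrix n n ℝ} (hA : A.PosSemidef) : hA.sqrt * hA.sqrt = A := by
  have hU : (star hA.1.eigenvectorUnitary : Matrix n n ℝ) * hA.1.eigenvectorUnitary.1 = 1 :=
    Unitary.coe_star_mul_self _
  have hd : diagonal ((↑) ∘ (√·) ∘ hA.1.eigenvalues) * diagonal ((↑) ∘ (√·) ∘ hA.1.eigenvalues)
      = diagonal (RCLike.ofReal ∘ hA.1.eigenvalues : n → ℝ) := by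
    rw [diagonal_mul_diagonal]
    congr 1
    funext i
    simp [Real.mul_self_sqrt (hA.eigenvalues_nonneg i)]
  conv_rhs => rw [hA.1.spectral_theorem, Unitary.conjStarAlgAut_apply]
  unfold Matrix.PosSemidef.sqrt
  rw [Matrix.mul_assoc, Matrix.mul_assoc, ← Matrix.mul_assoc (star _ : Matrix n n ℝ),
    ← Matrix.mul_assoc (star _ : Matrix n n ℝ), hU, Matrix.one_mul, ← hd]
  simp only [Matrix.mul_assoc]

lemma frobSq_nonneg {a b : Type*} [Fintype a] [Fintype b] (A : Matrix a b ℝ) :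
    0 ≤ frobSq A :=
  Finset.sum_nonneg fun _ _ => Finset.sum_nonneg fun _ _ => sq_nonneg _

lemma vecSq_nonneg {a : Type*} [Fintype a] (v : a → ℝ) : 0 ≤ vecSq v :=
  Finset.sum_nonneg fun _ _ => sq_nonneg _

lemma frobSq_pos {a b : Type*} [Fintype a] [Fintype b] {A : Matrix a b ℝ} (h : A ≠ 0) :
    0 < frobSq A := by
  obtain ⟨i, j, hij⟩ : ∃ i j, A i j ≠ 0 := by
    by_contra hc
    push_neg at hc
    exact h (by ext i j; simpa using hc i j)
  have h1 : (0:ℝ) < ∑ j, (A i j) ^ 2 := by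
    refine Finset.sum_pos' (fun _ _ => sq_nonneg _) ⟨j, Finset.mem_univ _, ?_⟩
    positivity
  refine Finset.sum_pos' (fun _ _ => Finset.sum_nonneg fun _ _ => sq_nonneg _)
    ⟨i, Finset.mem_univ _, h1⟩

lemma frob_expand {a b : Type*} [Fintype a] [Fintype b] (X Y : Matrix a b ℝ) (t : ℝ) :
    frobSq (X + t • Y) = frobSq Y * t ^ 2 + (2 * ∑ i, ∑ j, X i j * Y i j) * t + frobSq X := by
  simp only [frobSq, Matrix.add_apply, Matrix.smul_apply, smul_eq_mul, Finset.mul_sum,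
    Finset.sum_mul]
  rw [← Finset.sum_add_distrib, ← Finset.sum_add_distrib]
  refine Finset.sum_congr rfl fun i _ => ?_
  rw [← Finset.sum_add_distrib, ← Finset.sum_add_distrib]
  exact Finset.sum_congr rfl fun j _ => by ring

lemma vec_expand {a : Type*} [Fintype a] (v w : a → ℝ) (t : ℝ) :
    vecSq (v + t • w) = vecSq w * t ^ 2 + (2 * ∑ i, v i * w i) * t + vecSq v := by
  simp only [vecSq, Pi.add_apply, Pi.smul_apply, smul_eq_mul, Finset.mul_sum, Finset.sum_mul]
  rw [← Finset.sum_add_distrib, ← Finset.sum_add_distrib]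
  exact Finset.sum_congr rfl fun i _ => by ring

/-- The quadratic coefficient of `J̃` along the line `Q + t D`. -/
def Jquad {nn mm pp : ℕ}
    (P11 : Matrix (Fin nn) (Fin nn) ℝ) (P12 : Matrix (Fin nn) (Fin mm) ℝ)
    (C : Matrix (Fin pp) (Fin nn) ℝ)
    (Msq Swsq : Matrix (Fin nn) (Fin nn) ℝ)
    (Rsq : Matrix (Fin mm) (Fin mm) ℝ) (Svsq : Matrix (Fin pp) (Fin pp) ℝ)
    (μ : Fin nn → ℝ) (D : Matrix (Fin mm) (Fin pp) ℝ) : ℝ :=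
  frobSq (Msq * P12 * D * C * P11 * Swsq)
  + frobSq (Msq * P12 * D * Svsq)
  + frobSq (Rsq * D * C * P11 * Swsq)
  + frobSq (Rsq * D * Svsq)
  + vecSq ((Rsq * D * C * P11).mulVec μ)
  + vecSq ((Msq * P12 * D * C * P11).mulVec μ)

lemma Jtilde_line {nn mm pp : ℕ}
    (P11 : Matrix (Fin nn) (Fin nn) ℝ) (P12 : Matrix (Fin nn) (Fin mm) ℝ)
    (C : Matrix (Fin pp) (Fin nn) ℝ)
    (Msq Swsq : Matrix (Fin nn) (Fin nn) ℝ)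
    (Rsq : Matrix (Fin mm) (Fin mm) ℝ) (Svsq : Matrix (Fin pp) (Fin pp) ℝ)
    (μ : Fin nn → ℝ) (Q D : Matrix (Fin mm) (Fin pp) ℝ) :
    ∃ b : ℝ, ∀ t : ℝ,
      Jtilde P11 P12 C Msq Swsq Rsq Svsq μ (Q + t • D)
        = Jquad P11 P12 C Msq Swsq Rsq Svsq μ D * t ^ 2 + b * t
          + Jtilde P11 P12 C Msq Swsq Rsq Svsq μ Q := by
  refine ⟨(2 * ∑ i, ∑ j, (Msq * ((1 : Matrix (Fin nn) (Fin nn) ℝ) + P12 * Q * C) * P11 * Swsq) i j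
          * (Msq * P12 * D * C * P11 * Swsq) i j)
    + (2 * ∑ i, ∑ j, (Msq * P12 * Q * Svsq) i j * (Msq * P12 * D * Svsq) i j)
    + (2 * ∑ i, ∑ j, (Rsq * Q * C * P11 * Swsq) i j * (Rsq * D * C * P11 * Swsq) i j)
    + (2 * ∑ i, ∑ j, (Rsq * Q * Svsq) i j * (Rsq * D * Svsq) i j)
    + (2 * ∑ i, ((Rsq * Q * C * P11).mulVec μ) i * ((Rsq * D * C * P11).mulVec μ) i)
    + (2 * ∑ i, ((Msq * ((1 : Matrix (Fin nn) (Fin nn) ℝ) + P12 * Q * C) * P11).mulVec μ) i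
          * ((Msq * P12 * D * C * P11).mulVec μ) i), fun t => ?_⟩
  have h1 : Msq * (1 + P12 * (Q + t • D) * C) * P11 * Swsq
      = Msq * (1 + P12 * Q * C) * P11 * Swsq + t • (Msq * P12 * D * C * P11 * Swsq) := by
    simp only [Matrix.mul_add, Matrix.add_mul, mul_one, one_mul, Matrix.mul_smul,
      Matrix.smul_mul]
    simp only [Matrix.mul_assoc]
    abel
  have h2 : Msq * P12 * (Q + t • D) * Svsq
      = Msq * P12 * Q * Svsq + t • (Msq * P12 * D * Svsq) := by
    simp only [Matrix.mul_add, Matrix.add_mul, Matrix.mul_smul, Matrix.smul_mul]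
  have h3 : Rsq * (Q + t • D) * C * P11 * Swsq
      = Rsq * Q * C * P11 * Swsq + t • (Rsq * D * C * P11 * Swsq) := by
    simp only [Matrix.mul_add, Matrix.add_mul, Matrix.mul_smul, Matrix.smul_mul]
  have h4 : Rsq * (Q + t • D) * Svsq = Rsq * Q * Svsq + t • (Rsq * D * Svsq) := by
    simp only [Matrix.mul_add, Matrix.add_mul, Matrix.mul_smul, Matrix.smul_mul]
  have h5 : Rsq * (Q + t • D) * C * P11 = Rsq * Q * C * P11 + t • (Rsq * D * C * P11) := by
    simp only [Matrix.mul_add, Matrix.add_mul, Matrix.mul_smul, Matrix.smul_mul]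
  have h6 : Msq * (1 + P12 * (Q + t • D) * C) * P11
      = Msq * (1 + P12 * Q * C) * P11 + t • (Msq * P12 * D * C * P11) := by
    simp only [Matrix.mul_add, Matrix.add_mul, mul_one, one_mul, Matrix.mul_smul,
      Matrix.smul_mul]
    simp only [Matrix.mul_assoc]
    abel
  simp only [Jtilde, Jquad, h1, h2, h3, h4, h5, h6, Matrix.add_mul, Matrix.smul_mul,
    Matrix.add_mulVec, Matrix.smul_mulVec, frob_expand, vec_expand]
  ring

lemma strictConvexOn_of_line {E : Type*} [AddCommGroup E] [Module ℝ E]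
    (f : E → ℝ) (A : E → ℝ) (hA : ∀ d, d ≠ 0 → 0 < A d)
    (hline : ∀ x d, ∃ b c : ℝ, ∀ t : ℝ, f (x + t • d) = A d * t ^ 2 + b * t + c) :
    StrictConvexOn ℝ Set.univ f := by
  refine ⟨convex_univ, fun x _ y _ hxy a b ha hb hab => ?_⟩
  obtain ⟨B, Cc, h⟩ := hline x (y - x)
  have hx : f x = Cc := by simpa using h 0
  have hy : f y = A (y - x) + B + Cc := by
    have := h 1
    rw [one_smul, add_sub_cancel] at this
    rw [this]; ring
  have hxy' : a • x + b • y = x + b • (y - x) := by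
    have hab' : a = 1 - b := by linarith
    rw [hab', smul_sub, sub_smul, one_smul]
    abel
  rw [hxy', h b, hx, hy]
  have hApos := hA _ (sub_ne_zero.mpr (Ne.symm hxy))
  simp only [smul_eq_mul]
  have ha' : a = 1 - b := by linarith
  have key : A (y - x) * b ^ 2 + B * b + Cc
      = a * Cc + b * (A (y - x) + B + Cc) - A (y - x) * a * b := by
    rw [ha']; ring
  have hpos : 0 < A (y - x) * a * b := mul_pos (mul_pos hApos ha) hb
  linarith

end Aux

/-- Under the stated positive-(semi)definiteness assumptions on `M`, `Σw`,
`R`, `Σv`, the disturbance-feedback cost `J̃ : ℝ^{mN×pN} → ℝ` is a quadratic function of `Q`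
(along every line it is a polynomial of degree at most two) that is strictly convex on the
whole space `ℝ^{mN×pN}`. -/
theorem Jtilde_quadratic_strictConvex {n m p N : ℕ}
    (hn : 0 < n) (hm : 0 < m) (hp : 0 < p) (hN : 0 < N)
    (P11 : Matrix (Fin (n * (N + 1))) (Fin (n * (N + 1))) ℝ)
    (P12 : Matrix (Fin (n * (N + 1))) (Fin (m * N)) ℝ)
    (C : Matrix (Fin (p * N)) (Fin (n * (N + 1))) ℝ)
    {M W : Matrix (Fin (n * (N + 1))) (Fin (n * (N + 1))) ℝ}
    {R : Matrix (Fin (m * N)) (Fin (m * N)) ℝ}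
    {V : Matrix (Fin (p * N)) (Fin (p * N)) ℝ}
    (hM : M.PosSemidef) (hW : W.PosSemidef) (hR : R.PosDef) (hV : V.PosDef)
    (μ : Fin (n * (N + 1)) → ℝ) :
    StrictConvexOn ℝ Set.univ
      (Jtilde P11 P12 C hM.sqrt hW.sqrt hR.posSemidef.sqrt hV.posSemidef.sqrt μ) ∧
    ∀ Q D : Matrix (Fin (m * N)) (Fin (p * N)) ℝ, ∃ a b c : ℝ, ∀ t : ℝ,
      Jtilde P11 P12 C hM.sqrt hW.sqrt hR.posSemidef.sqrt hV.posSemidef.sqrt μ (Q + t • D)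
        = a * t ^ 2 + b * t + c := by
  set Msq := hM.sqrt
  set Swsq := hW.sqrt
  set Rsq := hR.posSemidef.sqrt with hRsq
  set Svsq := hV.posSemidef.sqrt with hVsq
  -- the square roots of the positive definite matrices are invertible
  have hRdet : IsUnit Rsq.det := by
    have hsq : Rsq * Rsq = R := hR.posSemidef.sqrt_mul_self
    have : Rsq.det * Rsq.det = R.det := by rw [← Matrix.det_mul, hsq]
    have hRd : R.det ≠ 0 := ne_of_gt hR.det_pos
    refine isUnit_iff_ne_zero.mpr fun h0 => hRd ?_
    rw [← this, h0, mul_zero]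
  have hVdet : IsUnit Svsq.det := by
    have hsq : Svsq * Svsq = V := hV.posSemidef.sqrt_mul_self
    have : Svsq.det * Svsq.det = V.det := by rw [← Matrix.det_mul, hsq]
    have hVd : V.det ≠ 0 := ne_of_gt hV.det_pos
    refine isUnit_iff_ne_zero.mpr fun h0 => hVd ?_
    rw [← this, h0, mul_zero]
  have hA : ∀ D : Matrix (Fin (m * N)) (Fin (p * N)) ℝ, D ≠ 0 →
      0 < Jquad P11 P12 C Msq Swsq Rsq Svsq μ D := by
    intro D hD
    have hzero : Rsq * D * Svsq ≠ 0 := by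
      intro h0
      apply hD
      have hcalc : Rsq⁻¹ * (Rsq * D * Svsq) * Svsq⁻¹ = D := by
        rw [Matrix.mul_assoc Rsq D Svsq, ← Matrix.mul_assoc Rsq⁻¹ Rsq (D * Svsq),
          Matrix.nonsing_inv_mul _ hRdet, Matrix.one_mul, Matrix.mul_assoc,
          Matrix.mul_nonsing_inv _ hVdet, Matrix.mul_one]
      rw [← hcalc, h0, Matrix.mul_zero, Matrix.zero_mul]
    have hpos : 0 < frobSq (Rsq * D * Svsq) := frobSq_pos hzero
    have n1 := frobSq_nonneg (Msq * P12 * D * C * P11 * Swsq)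
    have n2 := frobSq_nonneg (Msq * P12 * D * Svsq)
    have n3 := frobSq_nonneg (Rsq * D * C * P11 * Swsq)
    have n4 := vecSq_nonneg ((Rsq * D * C * P11).mulVec μ)
    have n5 := vecSq_nonneg ((Msq * P12 * D * C * P11).mulVec μ)
    unfold Jquad
    linarith
  constructor
  · refine strictConvexOn_of_line _ (Jquad P11 P12 C Msq Swsq Rsq Svsq μ) hA fun Q D => ?_
    obtain ⟨b, hb⟩ := Jtilde_line P11 P12 C Msq Swsq Rsq Svsq μ Q D
    exact ⟨b, _, hb⟩
  · intro Q D
    obtain ⟨b, hb⟩ := Jtilde_line P11 P12 C Msq Swsq Rsq Svsq μ Q D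
    exact ⟨_, b, _, hb⟩
end

section
/- Quadratic invariance theorem: let 𝒦 ⊆ ℝ^{mN×pN} be a linear subspace such that K·G is nilpotent for every K ∈ 𝒦. Then the following three statements are equivalent: (1) the set {(I − K·G)^{-1}·K : K ∈ 𝒦} is a convex subset of ℝ^{mN×pN}; (2) 𝒦 is quadratically invariant with respect to G; (3) {(I − K·G)^{-1}·K : K ∈ 𝒦} = 𝒦. -/
open Matrix Finset

set_option linter.unusedSectionVars false
variable {a b : Type*} [Fintype a] [Fintype b] [DecidableEq a] [DecidableEq b]

lemma nilp_one_sub_mul {A : Matrix a a ℝ} {n : ℕ} (hA : A ^ n = 0) :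
    (1 - A) * ∑ k ∈ range n, A ^ k = 1 := by
  have h := mul_geom_sum A n
  have : (1 - A) * ∑ k ∈ range n, A ^ k = -((A - 1) * ∑ k ∈ range n, A ^ k) := by
    rw [← neg_mul, neg_sub]
  rw [this, h, hA, zero_sub, neg_neg]

lemma nilp_inv_eq {A : Matrix a a ℝ} {n : ℕ} (hA : A ^ n = 0) :
    (1 - A)⁻¹ = ∑ k ∈ range n, A ^ k :=
  Matrix.inv_eq_right_inv (nilp_one_sub_mul hA)

lemma nilp_isUnit_det {A : Matrix a a ℝ} (hA : IsNilpotent A) : IsUnit (1 - A).det := by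
  obtain ⟨n, hn⟩ := hA
  exact Matrix.isUnit_det_of_right_inverse (nilp_one_sub_mul hn)

lemma nilp_inv_mul_self {A : Matrix a a ℝ} (hA : IsNilpotent A) : (1 - A)⁻¹ * (1 - A) = 1 :=
  Matrix.nonsing_inv_mul _ (nilp_isUnit_det hA)

lemma nilp_inv_comm {A : Matrix a a ℝ} (hA : IsNilpotent A) :
    (1 - A)⁻¹ * A = A * (1 - A)⁻¹ := by
  obtain ⟨n, hn⟩ := hA
  rw [nilp_inv_eq hn, Finset.sum_mul, Finset.mul_sum]
  exact Finset.sum_congr rfl fun k _ => ((pow_succ A k).symm.trans (pow_succ' A k))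

/-- expansion of the map as a finite geometric series -/
lemma F_expand {K : Matrix a b ℝ} {G : Matrix b a ℝ} {n : ℕ} (h : (K * G) ^ n = 0) :
    (1 - K * G)⁻¹ * K = ∑ k ∈ range n, (K * G) ^ k * K := by
  rw [nilp_inv_eq h, Matrix.sum_mul]

lemma F_nilp {K : Matrix a b ℝ} {G : Matrix b a ℝ} (h : IsNilpotent (K * G)) :
    IsNilpotent (((1 - K * G)⁻¹ * K) * G) := by
  have heq : ((1 - K * G)⁻¹ * K) * G = (1 - K * G)⁻¹ * (K * G) := Matrix.mul_assoc _ _ _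
  rw [heq]
  exact Commute.isNilpotent_mul_left (by rw [Commute, SemiconjBy, nilp_inv_comm h]) h

/-- the inverse map identity: g (f K) = K, where g is f with -G -/
lemma F_inv {K : Matrix a b ℝ} {G : Matrix b a ℝ} (h : IsNilpotent (K * G)) :
    (1 - ((1 - K * G)⁻¹ * K) * (-G))⁻¹ * ((1 - K * G)⁻¹ * K) = K := by
  set B := (1 - K * G)⁻¹ with hB
  set Kh := B * K with hKh
  have hnil : IsNilpotent (Kh * (-G)) := by
    rw [Matrix.mul_neg]; exact (F_nilp h).neg
  have key : (1 - Kh * (-G)) * K = Kh := by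
    have h1 : B * (1 - K * G) = 1 := nilp_inv_mul_self h
    have h2 : Kh * G = B * (K * G) := Matrix.mul_assoc _ _ _
    calc (1 - Kh * (-G)) * K = K + B * (K * G) * K := by
          rw [Matrix.mul_neg, sub_neg_eq_add, Matrix.add_mul, Matrix.one_mul, h2]
      _ = B * ((1 - K * G) * K) + B * (K * G) * K := by
          have h3 : B * ((1 - K * G) * K) = K := by
            rw [← Matrix.mul_assoc, h1, Matrix.one_mul]
          rw [h3]
      _ = B * ((1 - K * G) * K + (K * G) * K) := by
          rw [Matrix.mul_add, Matrix.mul_assoc]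
      _ = B * K := by rw [Matrix.sub_mul, Matrix.one_mul, sub_add_cancel]
  calc (1 - Kh * (-G))⁻¹ * Kh = (1 - Kh * (-G))⁻¹ * ((1 - Kh * (-G)) * K) := by rw [key]
    _ = K := by rw [← Matrix.mul_assoc, nilp_inv_mul_self hnil, Matrix.one_mul]


lemma coeff_zero_of_vanish {V : Type*} [AddCommGroup V] [Module ℝ V] [Module.Finite ℝ V]
    (c : ℕ → V) (n : ℕ)
    (h : ∀ t ∈ Set.Icc (0:ℝ) 1, ∑ k ∈ range n, t ^ k • c k = 0) :
    ∀ k < n, c k = 0 := by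
  intro k hk
  rw [← Module.forall_dual_apply_eq_zero_iff ℝ]
  intro φ
  set P : Polynomial ℝ := ∑ j ∈ range n, Polynomial.C (φ (c j)) * Polynomial.X ^ j with hP
  have heval : ∀ t ∈ Set.Icc (0:ℝ) 1, P.eval t = 0 := by
    intro t ht
    have : P.eval t = φ (∑ k ∈ range n, t ^ k • c k) := by
      rw [map_sum, hP, Polynomial.eval_finset_sum]
      exact Finset.sum_congr rfl fun j _ => by
        rw [Polynomial.eval_mul, Polynomial.eval_C, Polynomial.eval_pow, Polynomial.eval_X,
          LinearMap.map_smul, smul_eq_mul, mul_comm]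
    rw [this, h t ht, map_zero]
  have hinf : {x | P.IsRoot x}.Infinite := by
    apply Set.Infinite.mono (s := Set.Icc (0:ℝ) 1)
    · exact fun x hx => heval x hx
    · exact Set.infinite_coe_iff.mp (Set.Icc.infinite zero_lt_one)
  have hP0 : P = 0 := Polynomial.eq_zero_of_infinite_isRoot P hinf
  have : P.coeff k = φ (c k) := by
    rw [hP, Polynomial.finset_sum_coeff]
    simp only [Polynomial.coeff_C_mul, Polynomial.coeff_X_pow]
    rw [Finset.sum_eq_single k]
    · simp
    · intro j _ hj; simp [Ne.symm hj]
    · intro hkn; exact absurd (Finset.mem_range.mpr hk) hkn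
  rw [← this, hP0, Polynomial.coeff_zero]


/-- QI implies all terms (KG)^k K are in the subspace -/
lemma qi_pow_mem {G : Matrix b a ℝ} {𝒦 : Submodule ℝ (Matrix a b ℝ)}
    (hqi : ∀ K ∈ 𝒦, K * G * K ∈ 𝒦) {K : Matrix a b ℝ} (hK : K ∈ 𝒦) :
    ∀ k : ℕ, (K * G) ^ k * K ∈ 𝒦 := by
  have polar : ∀ K1 ∈ 𝒦, ∀ K2 ∈ 𝒦, K1 * G * K2 + K2 * G * K1 ∈ 𝒦 := by
    intro K1 h1 K2 h2
    have hs := hqi (K1 + K2) (𝒦.add_mem h1 h2)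
    have hexp : (K1 + K2) * G * (K1 + K2) =
        K1 * G * K1 + K2 * G * K2 + (K1 * G * K2 + K2 * G * K1) := by
      rw [Matrix.add_mul, Matrix.add_mul, Matrix.mul_add, Matrix.mul_add]
      abel
    have := 𝒦.sub_mem (hexp ▸ hs) (𝒦.add_mem (hqi K1 h1) (hqi K2 h2))
    simpa using this
  intro k
  induction k with
  | zero => simpa using hK
  | succ k ih =>
    have h1 : K * G * ((K * G) ^ k * K) = (K * G) ^ (k + 1) * K := by
      rw [← Matrix.mul_assoc, pow_succ']
    have h2 : ((K * G) ^ k * K) * G * K = (K * G) ^ (k + 1) * K := by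
      rw [pow_succ, Matrix.mul_assoc ((K*G)^k), Matrix.mul_assoc, Matrix.mul_assoc]
    have hsum := polar K hK ((K * G) ^ k * K) ih
    rw [h1, h2] at hsum
    have : (K * G) ^ (k + 1) * K = (2⁻¹ : ℝ) • ((K * G) ^ (k + 1) * K + (K * G) ^ (k + 1) * K) := by
      rw [smul_add]
      rw [← two_smul ℝ ((2⁻¹ : ℝ) • ((K * G) ^ (k + 1) * K))]
      rw [smul_smul]
      norm_num
    rw [this]
    exact 𝒦.smul_mem _ hsum

lemma smul_neg_expand {M : Matrix a b ℝ} {G : Matrix b a ℝ} (t : ℝ) :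
    (t • M) * (-G) = (-t) • (M * G) := by
  rw [Matrix.smul_mul, Matrix.mul_neg, smul_neg, ← neg_smul]

lemma conv_imp_qi {G : Matrix b a ℝ} {𝒦 : Submodule ℝ (Matrix a b ℝ)}
    (hnilp : ∀ K ∈ 𝒦, IsNilpotent (K * G))
    (hconv : Convex ℝ ((fun K : Matrix a b ℝ => (1 - K * G)⁻¹ * K) ''
      (𝒦 : Set (Matrix a b ℝ)))) :
    ∀ K ∈ 𝒦, K * G * K ∈ 𝒦 := by
  intro K hK
  set S := ((fun K : Matrix a b ℝ => (1 - K * G)⁻¹ * K) '' (𝒦 : Set (Matrix a b ℝ))) with hS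
  set Kh := (1 - K * G)⁻¹ * K with hKh
  have hKhS : Kh ∈ S := ⟨K, hK, rfl⟩
  have h0S : (0 : Matrix a b ℝ) ∈ S := ⟨0, 𝒦.zero_mem, by simp⟩
  obtain ⟨n, hn⟩ := F_nilp (hnilp K hK)
  rw [← hKh] at hn
  set c : ℕ → Matrix a b ℝ := fun k => (Kh * G) ^ k * Kh with hc
  -- step 1: for all t ∈ [0,1], g(t • Kh) ∈ 𝒦
  have key : ∀ t ∈ Set.Icc (0:ℝ) 1, (1 - (t • Kh) * (-G))⁻¹ * (t • Kh) ∈ 𝒦 := by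
    intro t ht
    have hmem : t • Kh ∈ S := by
      have h2 : (0:ℝ) ≤ 1 - t := by linarith [ht.2]
      have h3 : t + (1 - t) = 1 := by ring
      have := hconv hKhS h0S ht.1 h2 h3
      simpa using this
    obtain ⟨L, hL, hfL⟩ := hmem
    have : (1 - (t • Kh) * (-G))⁻¹ * (t • Kh) = L := by
      rw [← hfL]; exact F_inv (hnilp L hL)
    rw [this]; exact hL
  -- step 2: expand g(t • Kh) as a polynomial in t
  have expand : ∀ t : ℝ, (1 - (t • Kh) * (-G))⁻¹ * (t • Kh)
      = ∑ k ∈ range n, ((-t) ^ k * t) • c k := by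
    intro t
    have hpow : ((t • Kh) * (-G)) ^ n = 0 := by
      rw [smul_neg_expand, smul_pow, hn, smul_zero]
    rw [F_expand hpow]
    refine Finset.sum_congr rfl fun k _ => ?_
    rw [smul_neg_expand, smul_pow, Matrix.smul_mul, Matrix.mul_smul, smul_smul]
  -- step 3: all coefficients c k lie in 𝒦
  have hcmem : ∀ k : ℕ, c k ∈ 𝒦 := by
    set d : ℕ → Matrix a b ℝ ⧸ 𝒦 :=
      fun j => Nat.casesOn j 0 (fun k => ((-1:ℝ) ^ k) • 𝒦.mkQ (c k)) with hd
    have hd0 : d 0 = 0 := rfl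
    have hds : ∀ k, d (k + 1) = ((-1:ℝ) ^ k) • 𝒦.mkQ (c k) := fun k => rfl
    have hvan : ∀ t ∈ Set.Icc (0:ℝ) 1, ∑ j ∈ range (n + 1), t ^ j • d j = 0 := by
      intro t ht
      rw [Finset.sum_range_succ', hd0, smul_zero, add_zero]
      have hmem := key t ht
      rw [expand t] at hmem
      have h0 : 𝒦.mkQ (∑ k ∈ range n, ((-t) ^ k * t) • c k) = 0 := by
        rw [Submodule.mkQ_apply, Submodule.Quotient.mk_eq_zero]; exact hmem
      rw [map_sum] at h0
      rw [← h0]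
      refine Finset.sum_congr rfl fun k _ => ?_
      rw [hds, LinearMap.map_smul, smul_smul]
      congr 1
      rw [neg_pow]
      ring
    have hzero := coeff_zero_of_vanish _ (n + 1) hvan
    intro k
    by_cases hk : k < n
    · have := hzero (k + 1) (by omega)
      rw [hds] at this
      have h2 : 𝒦.mkQ (c k) = 0 := by
        have hne : ((-1:ℝ) ^ k) ≠ 0 := pow_ne_zero _ (by norm_num)
        rcases smul_eq_zero.mp this with h | h
        · exact absurd h hne
        · exact h
      rw [Submodule.mkQ_apply, Submodule.Quotient.mk_eq_zero] at h2
      exact h2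
    · have : c k = 0 := by
        rw [hc]
        have : (Kh * G) ^ k = 0 :=
          pow_eq_zero_of_le (by omega) hn
        simp [this]
      rw [this]; exact 𝒦.zero_mem
  -- step 4: K is a combination of the c k
  have hKeq : K = ∑ k ∈ range n, ((-1:ℝ) ^ k) • c k := by
    have h1 : (1 - Kh * (-G))⁻¹ * Kh = K := by
      rw [hKh]; exact F_inv (hnilp K hK)
    have hpow : (Kh * (-G)) ^ n = 0 := by
      have : Kh * (-G) = (-1:ℝ) • (Kh * G) := by
        rw [Matrix.mul_neg, neg_smul, one_smul]
      rw [this, smul_pow, hn, smul_zero]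
    rw [← h1, F_expand hpow]
    refine Finset.sum_congr rfl fun k _ => ?_
    have : Kh * (-G) = (-1:ℝ) • (Kh * G) := by
      rw [Matrix.mul_neg, neg_smul, one_smul]
    rw [this, smul_pow, Matrix.smul_mul]
  -- step 5: conclude
  have hmul : ∀ j k : ℕ, c j * G * c k = c (j + 1 + k) := by
    intro j k
    have h1 : c j * G = (Kh * G) ^ (j + 1) := by
      rw [hc, Matrix.mul_assoc, ← pow_succ]
    rw [h1, hc, ← Matrix.mul_assoc, ← pow_add]
  rw [hKeq, Matrix.sum_mul, Matrix.sum_mul]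
  refine Submodule.sum_mem _ fun j _ => ?_
  rw [Matrix.smul_mul, Matrix.smul_mul, Matrix.mul_sum]
  refine Submodule.smul_mem _ _ (Submodule.sum_mem _ fun k _ => ?_)
  rw [Matrix.mul_smul]
  refine Submodule.smul_mem _ _ ?_
  rw [hmul j k]
  exact hcmem _


lemma qi_imp_eq {a b : Type*} [Fintype a] [Fintype b] [DecidableEq a] [DecidableEq b]
    {G : Matrix b a ℝ} {𝒦 : Submodule ℝ (Matrix a b ℝ)}
    (hnilp : ∀ K ∈ 𝒦, IsNilpotent (K * G))
    (hqi : ∀ K ∈ 𝒦, K * G * K ∈ 𝒦) :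
    (fun K : Matrix a b ℝ => (1 - K * G)⁻¹ * K) '' (𝒦 : Set (Matrix a b ℝ)) =
      (𝒦 : Set (Matrix a b ℝ)) := by
  ext M
  constructor
  · rintro ⟨K, hK, rfl⟩
    obtain ⟨n, hn⟩ := hnilp K hK
    simp only [SetLike.mem_coe]
    rw [F_expand hn]
    exact Submodule.sum_mem _ fun k _ => qi_pow_mem hqi hK k
  · intro hM
    have hM' : M ∈ 𝒦 := hM
    have hnil' : IsNilpotent (M * (-G)) := by
      rw [Matrix.mul_neg]; exact (hnilp M hM').neg
    refine ⟨(1 - M * (-G))⁻¹ * M, ?_, ?_⟩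
    · obtain ⟨n, hn⟩ := hnil'
      simp only [SetLike.mem_coe]
      rw [F_expand hn]
      have hqi' : ∀ K ∈ 𝒦, K * (-G) * K ∈ 𝒦 := by
        intro L hL
        rw [Matrix.mul_neg, Matrix.neg_mul]
        exact 𝒦.neg_mem (hqi L hL)
      exact Submodule.sum_mem _ fun k _ => qi_pow_mem hqi' hM' k
    · have := F_inv (G := -G) hnil'
      rw [neg_neg] at this
      exact this

/-- **Quadratic invariance theorem.** Let `𝒦 ⊆ ℝ^{mN×pN}` be a linear subspace
such that `K·G` is nilpotent for every `K ∈ 𝒦`. The following are equivalent: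
(1) the set `{(I − K·G)⁻¹·K : K ∈ 𝒦}` is convex;
(2) `𝒦` is quadratically invariant with respect to `G` (`K·G·K ∈ 𝒦` for all `K ∈ 𝒦`);
(3) `{(I − K·G)⁻¹·K : K ∈ 𝒦} = 𝒦`. -/
theorem quadratic_invariance_tfae {m p N : ℕ}
    (hm : 0 < m) (hp : 0 < p) (hN : 0 < N)
    (G : Matrix (Fin (p * N)) (Fin (m * N)) ℝ)
    (𝒦 : Submodule ℝ (Matrix (Fin (m * N)) (Fin (p * N)) ℝ))
    (hnilp : ∀ K ∈ 𝒦, IsNilpotent (K * G)) :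
    (Convex ℝ ((fun K : Matrix (Fin (m * N)) (Fin (p * N)) ℝ => (1 - K * G)⁻¹ * K) ''
        (𝒦 : Set (Matrix (Fin (m * N)) (Fin (p * N)) ℝ))) ↔
      ∀ K ∈ 𝒦, K * G * K ∈ 𝒦) ∧
    ((∀ K ∈ 𝒦, K * G * K ∈ 𝒦) ↔
      (fun K : Matrix (Fin (m * N)) (Fin (p * N)) ℝ => (1 - K * G)⁻¹ * K) ''
        (𝒦 : Set (Matrix (Fin (m * N)) (Fin (p * N)) ℝ)) =
        (𝒦 : Set (Matrix (Fin (m * N)) (Fin (p * N)) ℝ))) := by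
  constructor
  · constructor
    · exact fun hconv => conv_imp_qi hnilp hconv
    · intro hqi
      rw [qi_imp_eq hnilp hqi]
      exact 𝒦.convex
  · constructor
    · exact fun hqi => qi_imp_eq hnilp hqi
    · intro heq
      apply conv_imp_qi hnilp
      rw [heq]
      exact 𝒦.convex
end

section
/- Closure of a strongly QI subspace under the feedback transformation: let 𝒦 ⊆ ℝ^{mN×pN} be a linear subspace that is strongly quadratically invariant with respect to G, and suppose Q·G is nilpotent for every Q ∈ 𝒦. Then for every Q ∈ 𝒦, the matrix (I + Q·G)^{-1}·Q belongs to 𝒦, and likewise (I − Q·G)^{-1}·Q belongs to 𝒦. -/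
open Matrix

lemma inv_one_sub_nilpotent {n : ℕ} (A : Matrix (Fin n) (Fin n) ℝ) (k : ℕ)
    (hA : A ^ k = 0) : (1 - A)⁻¹ = ∑ i ∈ Finset.range k, A ^ i := by
  have h : (1 - A) * ∑ i ∈ Finset.range k, A ^ i = 1 := by
    have := mul_geom_sum A k
    have h2 : (A - 1) * ∑ i ∈ Finset.range k, A ^ i = -1 := by
      rw [this, hA]; simp
    have h3 : (1 - A) = -(A - 1) := (neg_sub A 1).symm
    rw [h3, neg_mul, h2, neg_neg]
  exact Matrix.inv_eq_right_inv h

lemma pow_mul_mem {m p N : ℕ}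
    (G : Matrix (Fin (p * N)) (Fin (m * N)) ℝ)
    (𝒦 : Submodule ℝ (Matrix (Fin (m * N)) (Fin (p * N)) ℝ))
    (hSQI : ∀ K₁ ∈ 𝒦, ∀ K₂ ∈ 𝒦, K₁ * G * K₂ ∈ 𝒦)
    (Q : Matrix (Fin (m * N)) (Fin (p * N)) ℝ) (hQ : Q ∈ 𝒦) (i : ℕ) :
    (Q * G) ^ i * Q ∈ 𝒦 := by
  induction i with
  | zero => simpa using hQ
  | succ n ih =>
    have : (Q * G) ^ (n + 1) * Q = Q * G * ((Q * G) ^ n * Q) := by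
      rw [pow_succ', Matrix.mul_assoc]
    rw [this]
    exact hSQI Q hQ _ ih

/-- Closure of a strongly QI subspace under the feedback transformation:
if `𝒦 ⊆ ℝ^{mN×pN}` is strongly quadratically invariant with respect to `G`
(`K₁·G·K₂ ∈ 𝒦` for all `K₁, K₂ ∈ 𝒦`) and `Q·G` is nilpotent for every `Q ∈ 𝒦`, then for
every `Q ∈ 𝒦` both `(I + Q·G)⁻¹·Q` and `(I − Q·G)⁻¹·Q` belong to `𝒦`. -/
theorem strongQI_closed_feedback {m p N : ℕ}
    (hm : 0 < m) (hp : 0 < p) (hN : 0 < N)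
    (G : Matrix (Fin (p * N)) (Fin (m * N)) ℝ)
    (𝒦 : Submodule ℝ (Matrix (Fin (m * N)) (Fin (p * N)) ℝ))
    (hSQI : ∀ K₁ ∈ 𝒦, ∀ K₂ ∈ 𝒦, K₁ * G * K₂ ∈ 𝒦)
    (hnilp : ∀ Q ∈ 𝒦, IsNilpotent (Q * G)) :
    ∀ Q ∈ 𝒦, (1 + Q * G)⁻¹ * Q ∈ 𝒦 ∧ (1 - Q * G)⁻¹ * Q ∈ 𝒦 := by
  intro Q hQ
  obtain ⟨k, hk⟩ := hnilp Q hQ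
  have hneg : (-(Q * G)) ^ k = 0 := by
    rw [neg_pow, hk, mul_zero]
  constructor
  · have h1 : (1 + Q * G) = 1 - (-(Q * G)) := by rw [sub_neg_eq_add]
    rw [h1, inv_one_sub_nilpotent _ k hneg, Matrix.sum_mul]
    refine Submodule.sum_mem _ fun i _ => ?_
    have : (-(Q * G)) ^ i * Q = ((-1 : ℝ) ^ i) • ((Q * G) ^ i * Q) := by
      rw [show -(Q * G) = (-1 : ℝ) • (Q * G) from by simp, smul_pow, Matrix.smul_mul]
    rw [this]
    exact Submodule.smul_mem _ _ (pow_mul_mem G 𝒦 hSQI Q hQ i)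
  · rw [inv_one_sub_nilpotent _ k hk, Matrix.sum_mul]
    exact Submodule.sum_mem _ fun i _ => pow_mul_mem G 𝒦 hSQI Q hQ i
end

section
/- Existence of Wolfe step lengths: suppose f : ℝ^n → ℝ is continuously differentiable and bounded below. Let x ∈ ℝ^n and let p ∈ ℝ^n be a descent direction at x, i.e. ∇f(x)ᵀp < 0, and let 0 < c₁ < c₂ < 1. Then there exists a nonempty open interval (a, b) with 0 < a < b such that every η ∈ (a, b) satisfies both Wolfe conditions: f(x + η·p) ≤ f(x) + c₁·η·∇f(x)ᵀp and ∇f(x + η·p)ᵀp ≥ c₂·∇f(x)ᵀp. -/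
open scoped RealInnerProductSpace
open Set Filter Topology

/-- **existence of Wolfe step lengths.** If `f : ℝ^n → ℝ` is continuously
differentiable and bounded below, `p` is a descent direction at `x` (`∇f(x)ᵀp < 0`) and
`0 < c₁ < c₂ < 1`, then there is a nonempty open interval `(a, b)` with `0 < a < b` whose
every element `η` satisfies both Wolfe conditions
`f(x + η·p) ≤ f(x) + c₁·η·∇f(x)ᵀp` and `∇f(x + η·p)ᵀp ≥ c₂·∇f(x)ᵀp`. -/
theorem exists_wolfe_step_lengths {n : ℕ}
    (f : EuclideanSpace ℝ (Fin n) → ℝ)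
    (hf : ContDiff ℝ 1 f) (hbdd : BddBelow (Set.range f))
    (x p : EuclideanSpace ℝ (Fin n))
    (hdesc : ⟪gradient f x, p⟫ < 0)
    (c₁ c₂ : ℝ) (hc₁ : 0 < c₁) (hc₁₂ : c₁ < c₂) (hc₂ : c₂ < 1) :
    ∃ a b : ℝ, 0 < a ∧ a < b ∧ ∀ η ∈ Set.Ioo a b,
      f (x + η • p) ≤ f x + c₁ * η * ⟪gradient f x, p⟫ ∧
      c₂ * ⟪gradient f x, p⟫ ≤ ⟪gradient f (x + η • p), p⟫ := by
  set m : ℝ := ⟪gradient f x, p⟫ with hm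
  set φ : ℝ → ℝ := fun t => f (x + t • p) with hφdef
  set φ' : ℝ → ℝ := fun t => ⟪gradient f (x + t • p), p⟫ with hφ'def
  have hfd : Differentiable ℝ f := hf.differentiable one_ne_zero
  -- derivative of the restriction to the line
  have hline : ∀ t : ℝ, HasDerivAt (fun s : ℝ => x + s • p) p t := by
    intro t
    simpa using ((hasDerivAt_id t).smul_const p).const_add x
  have hφ : ∀ t : ℝ, HasDerivAt φ (φ' t) t := by
    intro t
    have h1 : HasFDerivAt f
        (InnerProductSpace.toDual ℝ _ (gradient f (x + t • p))) (x + t • p) :=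
      ((hfd (x + t • p)).hasGradientAt).hasFDerivAt
    have := h1.comp_hasDerivAt t (hline t)
    rw [InnerProductSpace.toDual_apply_apply] at this
    exact this
  -- continuity of φ'
  have hcontφ' : Continuous φ' := by
    have h1 : Continuous fun t : ℝ => gradient f (x + t • p) := by
      have : Continuous fun y => gradient f y := by
        have := hf.continuous_fderiv one_ne_zero
        exact (InnerProductSpace.toDual ℝ _).symm.continuous.comp this
      exact this.comp (continuous_const.add (continuous_id.smul continuous_const))
    exact h1.inner continuous_const
  have hcontφ : Continuous φ := hf.continuous.comp (continuous_const.add (continuous_id.smul continuous_const))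
  -- the auxiliary function g
  set g : ℝ → ℝ := fun t => φ t - (f x + c₁ * t * m) with hgdef
  set g' : ℝ → ℝ := fun t => φ' t - c₁ * m with hg'def
  have hg : ∀ t : ℝ, HasDerivAt g (g' t) t := by
    intro t
    have h2 : HasDerivAt (fun t : ℝ => f x + c₁ * t * m) (c₁ * m) t := by
      simpa using ((((hasDerivAt_id t).const_mul c₁).mul_const m).const_add (f x))
    exact (hφ t).sub h2
  have hcontg : Continuous g := by
    exact hcontφ.sub (continuous_const.add ((continuous_const.mul continuous_id).mul continuous_const))
  have hg0 : g 0 = 0 := by simp [hgdef, hφdef]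
  have hφ'0 : φ' 0 = m := by simp [hφ'def, hm]
  -- g is negative just right of 0
  have hslope : Tendsto (slope g 0) (𝓝[>] 0) (𝓝 (g' 0)) :=
    ((hasDerivAt_iff_tendsto_slope.mp (hg 0)).mono_left
      (nhdsWithin_mono _ (fun t ht => ne_of_gt ht)))
  have hg'0 : g' 0 < 0 := by
    have : g' 0 = (1 - c₁) * m := by simp [hg'def, hφ'0]; ring
    rw [this]
    exact mul_neg_of_pos_of_neg (by linarith) hdesc
  have hev : ∀ᶠ t in 𝓝[>] (0:ℝ), slope g 0 t < 0 :=
    hslope.eventually_lt_const hg'0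
  obtain ⟨u, hu, hIoo⟩ := mem_nhdsGT_iff_exists_Ioo_subset.mp hev
  have hu0 : (0:ℝ) < u := hu
  have hneg_small : ∀ t ∈ Ioo (0:ℝ) u, g t < 0 := by
    intro t ht
    have := hIoo ht
    have hslt : slope g 0 t < 0 := this
    rw [slope_def_field] at hslt
    have : (g t - g 0) / (t - 0) < 0 := hslt
    rw [hg0, sub_zero, sub_zero] at this
    exact (div_neg_iff.mp this).resolve_left (fun h => absurd ht.1 (not_lt.mpr h.2.le)) |>.1
  set t₁ : ℝ := u / 2 with ht₁def
  have ht₁pos : 0 < t₁ := by positivity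
  have hgt₁ : g t₁ < 0 := hneg_small t₁ ⟨ht₁pos, by linarith⟩
  -- g is eventually positive: boundedness below
  obtain ⟨B, hB⟩ := hbdd
  have hBle : ∀ y, B ≤ f y := fun y => hB ⟨y, rfl⟩
  have hcm : 0 < c₁ * (-m) := mul_pos hc₁ (by linarith)
  set T : ℝ := max (t₁ + 1) ((f x - B + 1) / (c₁ * (-m))) with hTdef
  have hTt₁ : t₁ < T := lt_of_lt_of_le (by linarith) (le_max_left _ _)
  have hgT : 0 < g T := by
    have h1 : (f x - B + 1) / (c₁ * (-m)) ≤ T := le_max_right _ _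
    have h2 : f x - B + 1 ≤ T * (c₁ * (-m)) := by
      rwa [div_le_iff₀ hcm] at h1
    have h3 : B ≤ φ T := hBle _
    have : g T = φ T - f x - c₁ * T * m := by rw [hgdef]; ring
    nlinarith
  -- first zero of g after t₁
  set Z : Set ℝ := {t | t ∈ Icc t₁ T ∧ g t = 0} with hZdef
  have hZne : Z.Nonempty := by
    have := intermediate_value_Icc hTt₁.le (hcontg.continuousOn (s := Icc t₁ T))
    have h0 : (0:ℝ) ∈ Icc (g t₁) (g T) := ⟨hgt₁.le, hgT.le⟩
    obtain ⟨t, ht, hgt⟩ := this h0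
    exact ⟨t, ht, hgt⟩
  have hZclosed : IsClosed Z := by
    have : Z = Icc t₁ T ∩ g ⁻¹' {0} := by ext t; simp [hZdef]
    rw [this]
    exact isClosed_Icc.inter (isClosed_singleton.preimage hcontg)
  have hZbdd : BddBelow Z := ⟨t₁, fun t ht => ht.1.1⟩
  set t₀ : ℝ := sInf Z with ht₀def
  have ht₀Z : t₀ ∈ Z := hZclosed.csInf_mem hZne hZbdd
  have ht₀t₁ : t₁ < t₀ := by
    rcases lt_or_eq_of_le ht₀Z.1.1 with h | h
    · exact h
    · exact absurd ht₀Z.2 (by rw [← h]; exact ne_of_lt hgt₁)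
  have ht₀pos : 0 < t₀ := lt_trans ht₁pos ht₀t₁
  -- g < 0 on (0, t₀)
  have hneg : ∀ t ∈ Ioo (0:ℝ) t₀, g t < 0 := by
    intro t ht
    by_cases hle : t ≤ t₁
    · exact hneg_small t ⟨ht.1, lt_of_le_of_lt hle (by linarith)⟩
    · push_neg at hle
      by_contra hpos
      push_neg at hpos
      rcases lt_or_eq_of_le hpos with h | h
      · -- g t > 0 : IVT between t₁ and t gives a zero below t₀
        have hIVT := intermediate_value_Icc hle.le (hcontg.continuousOn (s := Icc t₁ t))
        obtain ⟨s, hs, hgs⟩ := hIVT ⟨hgt₁.le, h.le⟩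
        have hsZ : s ∈ Z := ⟨⟨hs.1, le_trans hs.2 (le_trans ht.2.le ht₀Z.1.2)⟩, hgs⟩
        have := csInf_le hZbdd hsZ
        have : t₀ ≤ t := le_trans this hs.2
        exact absurd ht.2 (not_lt.mpr this)
      · have htZ : t ∈ Z := ⟨⟨hle.le, le_trans ht.2.le ht₀Z.1.2⟩, h.symm⟩
        have := csInf_le hZbdd htZ
        exact absurd ht.2 (not_lt.mpr this)
  -- MVT on [0, t₀]
  obtain ⟨η₀, hη₀mem, hη₀⟩ := exists_hasDerivAt_eq_slope g g' ht₀pos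
    (hcontg.continuousOn) (fun t _ => hg t)
  have hslope0 : (g t₀ - g 0) / (t₀ - 0) = 0 := by
    rw [hg0, ht₀Z.2]; simp
  rw [hslope0] at hη₀
  have hφ'η₀ : φ' η₀ = c₁ * m := by
    have : φ' η₀ - c₁ * m = 0 := hη₀
    linarith
  have hstrict : c₂ * m < φ' η₀ := by
    rw [hφ'η₀]
    exact mul_lt_mul_of_neg_right hc₁₂ hdesc
  have hgη₀ : g η₀ < 0 := hneg η₀ hη₀mem
  -- open interval around η₀
  set U : Set ℝ := {t | g t < 0 ∧ c₂ * m < φ' t} with hUdef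
  have hUopen : IsOpen U := by
    have h1 : IsOpen {t : ℝ | g t < 0} := isOpen_lt hcontg continuous_const
    have h2 : IsOpen {t : ℝ | c₂ * m < φ' t} := isOpen_lt continuous_const hcontφ'
    exact h1.inter h2
  have hUη₀ : η₀ ∈ U := ⟨hgη₀, hstrict⟩
  obtain ⟨l, v, hmem, hsub⟩ := mem_nhds_iff_exists_Ioo_subset.mp (hUopen.mem_nhds hUη₀)
  refine ⟨max l (η₀ / 2), v, lt_max_of_lt_right (by linarith [hη₀mem.1]), ?_, ?_⟩
  · exact lt_of_le_of_lt (max_le hmem.1.le (by linarith [hη₀mem.1])) hmem.2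
  · intro η hη
    have hηU : η ∈ U := hsub ⟨lt_of_le_of_lt (le_max_left _ _) hη.1, hη.2⟩
    refine ⟨?_, hηU.2.le⟩
    have := hηU.1
    rw [hgdef] at this
    simp only [hφdef] at this ⊢
    linarith
end

section
/- Binary test for strong quadratic invariance: let S ∈ {0,1}^{mN×pN} be a binary matrix, let G ∈ ℝ^{pN×mN}, and let Δ := Struct(G) ∈ {0,1}^{pN×mN} be the binary matrix with Δ_{ij} = 0 if G_{ij} = 0 and Δ_{ij} = 1 otherwise. If the Boolean product satisfies S·Δ·S ≤ S entrywise, then Sparse(S) is strongly quadratically invariant with respect to G: K₁·G·K₂ ∈ Sparse(S) for all K₁, K₂ ∈ Sparse(S). -/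
open Matrix

/-- **binary test for strong quadratic invariance.** Let `S` be a binary
matrix, `G ∈ ℝ^{pN×mN}`, and `Δ := Struct(G)` its sparsity pattern. If the Boolean product
satisfies `S·Δ·S ≤ S` entrywise (whenever there are `j, l` with `S i j = 1`, `G j l ≠ 0` and
`S l k = 1`, then `S i k = 1`), then `Sparse(S)` is strongly quadratically invariant with
respect to `G`: `K₁·G·K₂ ∈ Sparse(S)` for all `K₁, K₂ ∈ Sparse(S)`. -/
theorem binary_test_strong_QI {m p N : ℕ}
    (hm : 0 < m) (hp : 0 < p) (hN : 0 < N)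
    (S : Matrix (Fin (m * N)) (Fin (p * N)) Bool)
    (G : Matrix (Fin (p * N)) (Fin (m * N)) ℝ)
    (htest : ∀ i k, (∃ j l, S i j = true ∧ G j l ≠ 0 ∧ S l k = true) → S i k = true) :
    ∀ K₁ K₂ : Matrix (Fin (m * N)) (Fin (p * N)) ℝ,
      (∀ i j, S i j = false → K₁ i j = 0) →
      (∀ i j, S i j = false → K₂ i j = 0) →
      ∀ i j, S i j = false → (K₁ * G * K₂) i j = 0 := by
  intro K₁ K₂ h1 h2 i j hS
  simp only [Matrix.mul_apply]
  apply Finset.sum_eq_zero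
  intro l _
  rcases Bool.eq_false_or_eq_true (S l j) with hl | hl
  case inl =>
    rw [Finset.sum_mul]
    apply Finset.sum_eq_zero
    intro a _
    rcases Bool.eq_false_or_eq_true (S i a) with ha | ha
    case inl =>
      by_cases hG : G a l = 0
      · rw [hG, mul_zero, zero_mul]
      · exact absurd (htest i j ⟨a, l, ha, hG, hl⟩) (by simp [hS])
    case inr => rw [h1 i a ha, zero_mul, zero_mul]
  case inr => rw [h2 l j hl, mul_zero]
end
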